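/- Let R be a commutative ring with identity, S a multiplicatively closed subset (submonoid) of R, and P an I-prime ideal of R with S ∩ P = ∅. Then the extension S⁻¹P of P to the localization S⁻¹R is an S⁻¹I-prime ideal of S⁻¹R, where S⁻¹J denotes the extension of an ideal J of R along the localization map R → S⁻¹R. -/

import Mathlib

/-- A proper ideal `P` of a commutative ring `R` is `I`-prime if whenever
`a * b ∈ P \ I*P`, then `a ∈ P` or `b ∈ P`. -/
def IsIPrime {R : Type*} [CommRing R] (I P : Ideal R) : Prop :=
  P ≠ ⊤ ∧ ∀ a b : R, a * b ∈ P → a * b ∉ I * P → a ∈ P ∨ b ∈ P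

theorem stmt_19 {R : Type*} [CommRing R] (S : Submonoid R) (I P : Ideal R)
    (hP : IsIPrime I P) (hSP : Disjoint (S : Set R) (P : Set R)) :
    IsIPrime (I.map (algebraMap R (Localization S)))
      (P.map (algebraMap R (Localization S))) := by
  obtain ⟨hPtop, hPprime⟩ := hP
  constructor
  · intro htop
    have h1 : (1 : Localization S) ∈ P.map (algebraMap R (Localization S)) := by
      rw [htop]; trivial
    rw [IsLocalization.mem_map_algebraMap_iff S] at h1
    obtain ⟨⟨⟨p, hp⟩, s⟩, h⟩ := h1
    rw [one_mul] at h
    rw [IsLocalization.eq_iff_exists S] at h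
    obtain ⟨c, hc⟩ := h
    have hmem : (c : R) * s ∈ P := hc ▸ P.mul_mem_left c hp
    exact Set.disjoint_left.mp hSP (S.mul_mem c.2 s.2) hmem
  · intro x y hxy hxyIP
    obtain ⟨⟨a, s⟩, rfl : IsLocalization.mk' (Localization S) a s = x⟩ := IsLocalization.mk'_surjective S x
    obtain ⟨⟨b, t⟩, rfl : IsLocalization.mk' (Localization S) b t = y⟩ := IsLocalization.mk'_surjective S y
    rw [← IsLocalization.mk'_mul] at hxy hxyIP
    rw [← Ideal.map_mul] at hxyIP
    rw [IsLocalization.mk'_mem_map_algebraMap_iff S] at hxy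
    obtain ⟨u, huS, hu⟩ := hxy
    have huIP : u * (a * b) ∉ I * P := by
      intro h
      apply hxyIP
      have : IsLocalization.mk' (Localization S) (a * b * (⟨u, huS⟩ : S)) (s * t * ⟨u, huS⟩) ∈
          (I * P).map (algebraMap R (Localization S)) := by
        rw [IsLocalization.mk'_mem_map_algebraMap_iff S]
        exact ⟨1, S.one_mem, by rw [one_mul, mul_comm (a * b)]; exact h⟩
      rwa [IsLocalization.mk'_cancel] at this
    rw [← mul_assoc] at hu huIP
    rcases hPprime (u * a) b hu huIP with h | h
    · left
      have : IsLocalization.mk' (Localization S) a s =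
          IsLocalization.mk' (Localization S) (a * (⟨u, huS⟩ : S)) (s * ⟨u, huS⟩) :=
        (IsLocalization.mk'_cancel _ _ _).symm
      rw [this, IsLocalization.mk'_mem_map_algebraMap_iff S]
      exact ⟨1, S.one_mem, by rw [one_mul, mul_comm a]; exact h⟩
    · right
      rw [IsLocalization.mk'_mem_map_algebraMap_iff S]
      exact ⟨1, S.one_mem, by simpa using h⟩
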